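/- Let K be a number field whose ideal class group is cyclic generated by the class of a prime ideal 𝔓, let n₀ be the order of [𝔓], and η a generator of 𝔓^{n₀}. Then the ring 𝒪_{K,{v₀}} of elements of K integral at all finite places except the one corresponding to 𝔓 equals 𝒪_K[1/η]. -/

import Mathlib

open NumberField IsDedekindDomain

open IsDedekindDomain.HeightOneSpectrum Multiset UniqueFactorizationMonoid in
private lemma aux_dvd {R : Type*} [CommRing R] [IsDedekindDomain R] {a b : R}
    (ha : a ≠ 0) (hb : b ≠ 0)
    (h : ∀ v : HeightOneSpectrum R, v.intValuation a ≤ v.intValuation b) : b ∣ a := by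
  classical
  have ha' : Ideal.span {a} ≠ ⊥ := by simpa using ha
  have hb' : Ideal.span {b} ≠ ⊥ := by simpa using hb
  rw [← Ideal.span_singleton_le_span_singleton, ← Ideal.dvd_iff_le,
    dvd_iff_normalizedFactors_le_normalizedFactors hb' ha', Multiset.le_iff_count]
  intro P
  by_cases hP : P ∈ normalizedFactors (Ideal.span {b})
  · have hPprime : Prime P := prime_of_normalized_factor P hP
    set v : HeightOneSpectrum R :=
      ⟨P, Ideal.isPrime_of_prime hPprime, hPprime.ne_zero⟩ with hv
    set n : ℕ := count P (normalizedFactors (Ideal.span {b})) with hn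
    have hrep : Multiset.replicate n P ≤ normalizedFactors (Ideal.span {b}) :=
      Multiset.le_count_iff_replicate_le.mp le_rfl
    have hpowb : P ^ n ∣ Ideal.span {b} := by
      have := Multiset.prod_dvd_prod_of_le hrep
      rwa [Multiset.prod_replicate, prod_normalizedFactors_eq_self hb'] at this
    have hvb : v.intValuation b ≤ Multiplicative.ofAdd (-(n : ℤ)) :=
      (v.intValuation_le_pow_iff_dvd b n).mpr hpowb
    have hpowa : P ^ n ∣ Ideal.span {a} :=
      (v.intValuation_le_pow_iff_dvd a n).mp ((h v).trans hvb)
    have : (n : ℕ∞) ≤ emultiplicity P (Ideal.span {a}) :=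
      pow_dvd_iff_le_emultiplicity.mp hpowa
    rw [le_emultiplicity_iff_replicate_le_normalizedFactors
      hPprime.irreducible ha', normalize_eq P] at this
    exact Multiset.le_count_iff_replicate_le.mpr this
  · simp [Multiset.count_eq_zero_of_notMem hP]

open IsDedekindDomain.HeightOneSpectrum in
private lemma aux_int {R : Type*} [CommRing R] [IsDedekindDomain R] {K : Type*} [Field K]
    [Algebra R K] [IsFractionRing R K] {x : K}
    (hx : ∀ v : HeightOneSpectrum R, v.valuation K x ≤ 1) :
    ∃ r : R, algebraMap R K r = x := by
  obtain ⟨⟨a, b⟩, rfl⟩ := IsLocalization.mk'_surjective (nonZeroDivisors R) x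
  by_cases ha : a = 0
  · exact ⟨0, by simp [ha]⟩
  have hb : (b : R) ≠ 0 := nonZeroDivisors.coe_ne_zero b
  have hdvd : (b : R) ∣ a := by
    refine aux_dvd ha hb fun v => ?_
    have h1 := hx v
    rw [valuation_of_mk'] at h1
    have hbne : v.intValuation (b : R) ≠ 0 := v.intValuation_ne_zero _ hb
    rw [div_le_one₀ (lt_of_le_of_ne (zero_le') (Ne.symm hbne))] at h1
    exact h1
  obtain ⟨c, rfl⟩ := hdvd
  refine ⟨c, ?_⟩
  rw [eq_comm, mul_comm, IsLocalization.mk'_eq_iff_eq_mul, map_mul]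

/-- If the class group of `K` is generated by the class of a prime `𝔓` (corresponding
to the height-one prime `v₀`), `n₀` is the order of `[𝔓]` and `η` generates `𝔓^{n₀}`,
then the ring of `{𝔓}`-integers `𝒪_{K,{v₀}}` equals `𝒪_K[1/η]`. -/
theorem stmt_17 (K : Type*) [Field K] [NumberField K]
    (v₀ : HeightOneSpectrum (𝓞 K))
    (hP : v₀.asIdeal ∈ nonZeroDivisors (Ideal (𝓞 K)))
    (hgen : ∀ c : ClassGroup (𝓞 K), c ∈ Subgroup.zpowers (ClassGroup.mk0 ⟨v₀.asIdeal, hP⟩))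
    (n₀ : ℕ) (hn₀ : orderOf (ClassGroup.mk0 ⟨v₀.asIdeal, hP⟩) = n₀)
    (η : 𝓞 K) (hη : v₀.asIdeal ^ n₀ = Ideal.span {η}) :
    {x : K | ∀ w : HeightOneSpectrum (𝓞 K), w ≠ v₀ → w.valuation K x ≤ 1} =
      (Algebra.adjoin (𝓞 K) {(algebraMap (𝓞 K) K η)⁻¹} : Subalgebra (𝓞 K) K) := by
  classical
  have hn0 : n₀ ≠ 0 := by
    rw [← hn₀]
    exact (orderOf_pos _).ne'
  have hηne : η ≠ 0 := by
    rintro rfl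
    rw [Set.singleton_zero, Ideal.span_zero] at hη
    exact v₀.ne_bot (pow_eq_zero_iff hn0 |>.mp (by rw [hη]; rfl))
  have hηKne : algebraMap (𝓞 K) K η ≠ 0 := by
    simpa using hηne
  -- valuation of η away from v₀ is 1
  have hw1 : ∀ w : HeightOneSpectrum (𝓞 K), w ≠ v₀ → w.intValuation η = 1 := by
    intro w hw
    refine le_antisymm (w.intValuation_le_one η) ?_
    by_contra hlt
    rw [not_le] at hlt
    have hdvd : w.asIdeal ∣ Ideal.span {η} := (w.intValuation_lt_one_iff_dvd η).mp hlt
    rw [← hη] at hdvd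
    have : w.asIdeal ∣ v₀.asIdeal := (Ideal.prime_of_isPrime w.ne_bot w.isPrime).dvd_of_dvd_pow hdvd
    have hle : v₀.asIdeal ≤ w.asIdeal := Ideal.le_of_dvd this
    have : v₀.asIdeal = w.asIdeal :=
      ((v₀.isPrime.isMaximal v₀.ne_bot).eq_of_le w.isPrime.ne_top hle)
    exact hw (IsDedekindDomain.HeightOneSpectrum.ext this.symm)
  -- valuation of η at v₀
  have hv0 : v₀.intValuation η ≤ Multiplicative.ofAdd (-(n₀ : ℤ)) :=
    (v₀.intValuation_le_pow_iff_dvd η n₀).mpr (hη ▸ dvd_refl _)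
  ext x
  simp only [Set.mem_setOf_eq, SetLike.mem_coe]
  constructor
  · intro hx
    by_cases hx0 : x = 0
    · rw [hx0]; exact zero_mem _
    have hγ : v₀.valuation K x ≠ 0 := (Valuation.ne_zero_iff _).mpr hx0
    obtain ⟨g, hg⟩ := WithZero.ne_zero_iff_exists.mp hγ
    set m : ℕ := (Multiplicative.toAdd g).toNat with hm
    have hy : ∀ v : HeightOneSpectrum (𝓞 K),
        v.valuation K (algebraMap (𝓞 K) K (η ^ m) * x) ≤ 1 := by
      intro v
      rw [map_mul, IsDedekindDomain.HeightOneSpectrum.valuation_of_algebraMap, map_pow]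
      by_cases hv : v = v₀
      · subst hv
        calc v.intValuation η ^ m * v.valuation K x
            ≤ (Multiplicative.ofAdd (-(n₀ : ℤ)) : Multiplicative ℤ) ^ m * g := by
              rw [← hg]
              exact mul_le_mul' (pow_le_pow_left' hv0 m) le_rfl
          _ ≤ 1 := by
              rw [← WithZero.coe_pow, ← WithZero.coe_mul, ← WithZero.coe_one,
                WithZero.coe_le_coe, ← ofAdd_toAdd g, ← ofAdd_zero]
              rw [← ofAdd_nsmul, ← ofAdd_add, Multiplicative.ofAdd_le]
              have h1 : Multiplicative.toAdd g ≤ (m : ℤ) := Int.self_le_toNat _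
              have h2 : (m : ℤ) ≤ (n₀ : ℤ) * m :=
                le_mul_of_one_le_left (Int.ofNat_nonneg m)
                  (by omega)
              simp only [nsmul_eq_mul, mul_neg]
              linarith [h1, h2, mul_comm (m:ℤ) (n₀:ℤ)]
      · rw [hw1 v hv, one_pow, one_mul]
        exact hx v hv
    obtain ⟨r, hr⟩ := aux_int hy
    rw [map_pow] at hr
    have hxeq : algebraMap (𝓞 K) K r * ((algebraMap (𝓞 K) K η)⁻¹) ^ m = x := by
      rw [hr, inv_pow, mul_comm _ x, mul_assoc,
        mul_inv_cancel₀ (pow_ne_zero m hηKne), mul_one]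
    rw [← hxeq]
    refine mul_mem (Subalgebra.algebraMap_mem _ r) (pow_mem ?_ m)
    exact Algebra.subset_adjoin (Set.mem_singleton _)
  · intro hx
    refine Algebra.adjoin_induction (p := fun y _ =>
        ∀ w : HeightOneSpectrum (𝓞 K), w ≠ v₀ → w.valuation K y ≤ 1) ?_ ?_ ?_ ?_ hx
    · rintro y hy w hw
      rw [Set.mem_singleton_iff] at hy
      subst hy
      rw [map_inv₀, IsDedekindDomain.HeightOneSpectrum.valuation_of_algebraMap,
        hw1 w hw, inv_one]
    · intro r w _
      exact w.valuation_le_one r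
    · intro y z _ _ hy hz w hw
      exact ((w.valuation K).map_add y z).trans (max_le (hy w hw) (hz w hw))
    · intro y z _ _ hy hz w hw
      rw [map_mul]
      exact mul_le_one' (hy w hw) (hz w hw)
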